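/- Let Q be symmetric positive semidefinite with block decomposition Q = U + D + U^*, where D (the block-diagonal part) is symmetric positive definite and U is the strictly upper block-triangular part. Define T = U D^{-1} U^*. Then Q + T is symmetric positive definite. -/

import Mathlib

open Matrix

theorem stmt2 {N s : ℕ} (β : Fin N → Fin s) (Q D U : Matrix (Fin N) (Fin N) ℝ)
    (hQ : Q.PosSemidef) (hD : D.PosDef)
    (hDblock : ∀ i j, β i ≠ β j → D i j = 0)
    (hUupper : ∀ i j, ¬ β i < β j → U i j = 0)
    (hdecomp : Q = U + D + Uᵀ) :
    (Q + U * D⁻¹ * Uᵀ).PosDef := by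
  have hDinv : (D⁻¹).PosDef := hD.inv
  have hT : (U * D⁻¹ * Uᵀ).PosSemidef := by
    have := hDinv.posSemidef.mul_mul_conjTranspose_same U
    simpa using this
  have hherm : (Q + U * D⁻¹ * Uᵀ).IsHermitian := hQ.1.add hT.1
  refine PosDef.of_dotProduct_mulVec_pos hherm (fun x hx => ?_)
  simp only [add_mulVec, dotProduct_add, star_trivial]
  by_cases hy : Uᵀ *ᵥ x = 0
  · have hq : x ⬝ᵥ Q *ᵥ x = x ⬝ᵥ D *ᵥ x := by
      have hU : x ⬝ᵥ U *ᵥ x = 0 := by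
        rw [dotProduct_mulVec, ← mulVec_transpose, hy, zero_dotProduct]
      rw [hdecomp, add_mulVec, add_mulVec, dotProduct_add, dotProduct_add, hU, hy,
        dotProduct_zero]
      ring
    have ht : x ⬝ᵥ (U * D⁻¹ * Uᵀ) *ᵥ x ≥ 0 := by simpa using hT.dotProduct_mulVec_nonneg x
    have hd : 0 < x ⬝ᵥ D *ᵥ x := by simpa using hD.dotProduct_mulVec_pos hx
    linarith [hq ▸ hd]
  · have ht : 0 < x ⬝ᵥ (U * D⁻¹ * Uᵀ) *ᵥ x := by
      have : x ⬝ᵥ (U * D⁻¹ * Uᵀ) *ᵥ x = (Uᵀ *ᵥ x) ⬝ᵥ D⁻¹ *ᵥ (Uᵀ *ᵥ x) := by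
        rw [← mulVec_mulVec, ← mulVec_mulVec, dotProduct_mulVec, ← mulVec_transpose]
      rw [this]
      simpa using hDinv.dotProduct_mulVec_pos hy
    have hq : x ⬝ᵥ Q *ᵥ x ≥ 0 := by simpa using hQ.dotProduct_mulVec_nonneg x
    linarith
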